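/- Let (A,d) be a finite nonempty metric space, and for t > 0 let tA denote (A, t·d) with similarity matrix Z_{tA}(a,b) = exp(-t·d(a,b)). Then: (1) the set of t > 0 for which Z_{tA} is not invertible is finite; (2) there exists t₀ > 0 such that Z_{tA} is invertible for all t ≥ t₀ and the magnitude function t ↦ |tA| is monotone increasing on [t₀,∞); and (3) lim_{t→∞} |tA| = #A. -/

import Mathlib

open Matrix BigOperators Filter Topology

set_option linter.unusedSectionVars false


section helpers
variable {X : Type*} [Fintype X] [DecidableEq X]

private lemma my_det_differentiable {M : ℝ → Matrix X X ℝ}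
    (h : ∀ a b, Differentiable ℝ fun t => M t a b) :
    Differentiable ℝ fun t => (M t).det := by
  simp only [Matrix.det_apply']
  exact Differentiable.fun_sum fun σ _ =>
    (Differentiable.fun_finsetProd fun i _ => h _ _).const_mul _

private lemma my_det_tendsto {M : ℝ → Matrix X X ℝ} {L : Matrix X X ℝ}
    (h : ∀ a b, Tendsto (fun t => M t a b) atTop (𝓝 (L a b))) :
    Tendsto (fun t => (M t).det) atTop (𝓝 L.det) := by
  simp only [Matrix.det_apply']
  exact tendsto_finset_sum _ fun σ _ =>
    tendsto_const_nhds.mul (tendsto_finset_prod _ fun i _ => h _ _)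

private lemma my_adj_differentiable {M : ℝ → Matrix X X ℝ}
    (h : ∀ a b, Differentiable ℝ fun t => M t a b) (a b : X) :
    Differentiable ℝ fun t => (M t).adjugate a b := by
  simp only [Matrix.adjugate_apply]
  refine my_det_differentiable fun c e => ?_
  simp only [Matrix.updateRow_apply]
  by_cases hcb : c = b
  · simp [hcb]
  · simpa [hcb] using h c e

private lemma my_adj_tendsto {M : ℝ → Matrix X X ℝ} {L : Matrix X X ℝ}
    (h : ∀ a b, Tendsto (fun t => M t a b) atTop (𝓝 (L a b))) (a b : X) :
    Tendsto (fun t => (M t).adjugate a b) atTop (𝓝 (L.adjugate a b)) := by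
  simp only [Matrix.adjugate_apply]
  refine my_det_tendsto fun c e => ?_
  simp only [Matrix.updateRow_apply]
  by_cases hcb : c = b
  · simp [hcb]
  · simpa [hcb] using h c e

private lemma my_inv_entry (M : Matrix X X ℝ) (a b : X) :
    M⁻¹ a b = (M.det)⁻¹ * M.adjugate a b := by
  rw [Matrix.inv_def, Ring.inverse_eq_inv', Matrix.smul_apply, smul_eq_mul]

end helpers

section main
variable {X : Type*} [MetricSpace X] [Fintype X] [DecidableEq X] [Nonempty X]

private noncomputable def Zm (t : ℝ) : Matrix X X ℝ :=
  Matrix.of fun a b : X => Real.exp (-(t * dist a b))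

private lemma Zm_diff_ent (a b : X) : Differentiable ℝ fun t : ℝ => Zm (X := X) t a b :=
  ((differentiable_id.mul_const _).neg).exp

private lemma Zm_tend_ent (a b : X) :
    Tendsto (fun t : ℝ => Zm (X := X) t a b) atTop (𝓝 ((1 : Matrix X X ℝ) a b)) := by
  by_cases hab : a = b
  · subst hab
    simp only [Zm, Matrix.of_apply, dist_self, mul_zero, neg_zero, Real.exp_zero,
      Matrix.one_apply_eq]
    exact tendsto_const_nhds
  · have hd : (0 : ℝ) < dist a b := dist_pos.2 hab
    have h1 : Tendsto (fun t : ℝ => -(t * dist a b)) atTop atBot :=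
      tendsto_neg_atTop_atBot.comp (tendsto_id.atTop_mul_const hd)
    have := Real.tendsto_exp_atBot.comp h1
    rw [Matrix.one_apply_ne hab]
    exact this

private lemma Zm_det_tendsto : Tendsto (fun t => (Zm (X := X) t).det) atTop (𝓝 1) := by
  simpa using my_det_tendsto (L := (1 : Matrix X X ℝ)) Zm_tend_ent

private lemma Zm_inv_tendsto (a b : X) :
    Tendsto (fun t => (Zm (X := X) t)⁻¹ a b) atTop (𝓝 ((1 : Matrix X X ℝ) a b)) := by
  have h1 : Tendsto (fun t => (Zm (X := X) t).adjugate a b) atTop (𝓝 ((1 : Matrix X X ℝ) a b)) := by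
    simpa [Matrix.adjugate_one] using my_adj_tendsto Zm_tend_ent a b
  have h2 := (Zm_det_tendsto (X := X).inv₀ one_ne_zero).mul h1
  simp only [inv_one, one_mul] at h2
  simpa only [my_inv_entry] using h2

private lemma Zm_inv_diffAt {t : ℝ} (ht : (Zm (X := X) t).det ≠ 0) (a b : X) :
    DifferentiableAt ℝ (fun s => (Zm (X := X) s)⁻¹ a b) t := by
  have heq : (fun s => (Zm (X := X) s)⁻¹ a b)
      = fun s => ((Zm (X := X) s).det)⁻¹ * (Zm (X := X) s).adjugate a b :=
    funext fun s => my_inv_entry _ a b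
  rw [heq]
  exact (((my_det_differentiable Zm_diff_ent) t).inv ht).mul
    ((my_adj_differentiable Zm_diff_ent a b) t)
end main

section main2
variable {X : Type*} [MetricSpace X] [Fintype X] [DecidableEq X] [Nonempty X]

private lemma Zm_symm (t : ℝ) : (Zm (X := X) t)ᵀ = Zm t := by
  ext a b; simp [Zm, dist_comm]

private lemma my_interchange (T : X → X → X → X → ℝ) :
    ∑ a : X, ∑ b : X, ∑ c : X, ∑ e : X, T a b c e
      = ∑ c : X, ∑ e : X, ∑ a : X, ∑ b : X, T a b c e :=
  calc ∑ a : X, ∑ b : X, ∑ c : X, ∑ e : X, T a b c e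
      = ∑ a : X, ∑ c : X, ∑ b : X, ∑ e : X, T a b c e :=
        Finset.sum_congr rfl fun a _ => Finset.sum_comm
    _ = ∑ c : X, ∑ a : X, ∑ b : X, ∑ e : X, T a b c e := Finset.sum_comm
    _ = ∑ c : X, ∑ a : X, ∑ e : X, ∑ b : X, T a b c e :=
        Finset.sum_congr rfl fun c _ => Finset.sum_congr rfl fun a _ => Finset.sum_comm
    _ = ∑ c : X, ∑ e : X, ∑ a : X, ∑ b : X, T a b c e :=
        Finset.sum_congr rfl fun c _ => Finset.sum_comm

private lemma Zm_deriv_nonneg {t : ℝ} (ht : (Zm (X := X) t).det ≠ 0)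
    (hw : ∀ c : X, 0 < ∑ a : X, (Zm (X := X) t)⁻¹ a c) :
    0 ≤ deriv (fun s : ℝ => ∑ a : X, ∑ b : X, (Zm (X := X) s)⁻¹ a b) t := by
  classical
  set G : Matrix X X ℝ := (Zm (X := X) t)⁻¹ with hGdef
  set Z' : Matrix X X ℝ :=
    Matrix.of (fun a b : X => Real.exp (-(t * dist a b)) * -(dist a b)) with hZ'def
  set G' : Matrix X X ℝ :=
    Matrix.of (fun a b : X => deriv (fun s => (Zm (X := X) s)⁻¹ a b) t) with hG'def
  have hG' : ∀ a b : X, HasDerivAt (fun s => (Zm (X := X) s)⁻¹ a b) (G' a b) t :=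
    fun a b => (Zm_inv_diffAt ht a b).hasDerivAt
  have hZ' : ∀ a b : X, HasDerivAt (fun s => Zm (X := X) s a b) (Z' a b) t := by
    intro a b
    have h1 : HasDerivAt (fun s : ℝ => -(s * dist a b)) (-(dist a b)) t := by
      simpa using ((hasDerivAt_id t).mul_const (dist a b)).fun_neg
    exact h1.exp
  have hnz : ∀ᶠ s in 𝓝 t, (Zm (X := X) s).det ≠ 0 :=
    ((my_det_differentiable Zm_diff_ent).continuous.continuousAt).eventually_ne ht
  have hunit : IsUnit (Zm (X := X) t).det := isUnit_iff_ne_zero.2 ht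
  -- key identity
  have key : G' * Zm t + G * Z' = 0 := by
    ext a b
    have h1 : HasDerivAt (fun s => ∑ c : X, (Zm (X := X) s)⁻¹ a c * Zm (X := X) s c b)
        (∑ c : X, (G' a c * Zm (X := X) t c b + G a c * Z' c b)) t :=
      HasDerivAt.fun_sum fun c _ => (hG' a c).fun_mul (hZ' c b)
    have h2 : (fun s => ∑ c : X, (Zm (X := X) s)⁻¹ a c * Zm (X := X) s c b)
        =ᶠ[𝓝 t] fun _ => (1 : Matrix X X ℝ) a b := by
      filter_upwards [hnz] with s hs
      have hmul : (Zm (X := X) s)⁻¹ * Zm s = 1 :=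
        Matrix.nonsing_inv_mul _ (isUnit_iff_ne_zero.2 hs)
      calc ∑ c : X, (Zm (X := X) s)⁻¹ a c * Zm (X := X) s c b
          = ((Zm (X := X) s)⁻¹ * Zm (X := X) s) a b := by rw [Matrix.mul_apply]
        _ = (1 : Matrix X X ℝ) a b := by rw [hmul]
    have h3 := (h1.congr_of_eventuallyEq h2.symm).unique (hasDerivAt_const _ _)
    simp only [Matrix.add_apply, Matrix.mul_apply, Matrix.zero_apply]
    rw [← Finset.sum_add_distrib]
    exact h3
  have hGid : G' = -(G * Z' * G) := by
    have h5 : G' * Zm t = -(G * Z') := eq_neg_of_add_eq_zero_left key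
    calc G' = G' * 1 := (mul_one G').symm
      _ = G' * (Zm t * G) := by rw [hGdef, Matrix.mul_nonsing_inv _ hunit]
      _ = G' * Zm t * G := (Matrix.mul_assoc _ _ _).symm
      _ = -(G * Z') * G := by rw [h5]
      _ = -(G * Z' * G) := by rw [neg_mul]
  -- symmetry of G
  have hsymmG : Gᵀ = G := by rw [hGdef, Matrix.transpose_nonsing_inv, Zm_symm]
  have hsym : ∀ e b : X, G e b = G b e := fun e b =>
    calc G e b = Gᵀ b e := rfl
      _ = G b e := by rw [hsymmG]
  have hrowG : ∀ e : X, ∑ b : X, G e b = ∑ a : X, G a e := fun e =>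
    Finset.sum_congr rfl fun b _ => hsym e b
  -- derivative of magnitude
  have hfd : HasDerivAt (fun s : ℝ => ∑ a : X, ∑ b : X, (Zm (X := X) s)⁻¹ a b)
      (∑ a : X, ∑ b : X, G' a b) t :=
    HasDerivAt.fun_sum fun a _ => HasDerivAt.fun_sum fun b _ => hG' a b
  rw [hfd.deriv]
  -- expand the sum
  have expand : ∑ a : X, ∑ b : X, (G * Z' * G) a b
      = ∑ c : X, ∑ e : X, Z' c e * ((∑ a : X, G a c) * (∑ a : X, G a e)) := by
    calc ∑ a : X, ∑ b : X, (G * Z' * G) a b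
        = ∑ a : X, ∑ b : X, ∑ c : X, ∑ e : X, G a c * Z' c e * G e b := by
          refine Finset.sum_congr rfl fun a _ => Finset.sum_congr rfl fun b _ => ?_
          simp only [Matrix.mul_apply, Finset.sum_mul]
          exact Finset.sum_comm
      _ = ∑ c : X, ∑ e : X, ∑ a : X, ∑ b : X, G a c * Z' c e * G e b := my_interchange _
      _ = ∑ c : X, ∑ e : X, Z' c e * ((∑ a : X, G a c) * (∑ a : X, G a e)) := by
          refine Finset.sum_congr rfl fun c _ => Finset.sum_congr rfl fun e _ => ?_
          calc ∑ a : X, ∑ b : X, G a c * Z' c e * G e b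
              = ∑ a : X, G a c * Z' c e * (∑ a : X, G a e) :=
                Finset.sum_congr rfl fun a _ => by rw [← Finset.mul_sum, hrowG e]
            _ = (∑ a : X, G a c) * (Z' c e * (∑ a : X, G a e)) := by
                rw [Finset.sum_mul]
                exact Finset.sum_congr rfl fun a _ => mul_assoc _ _ _
            _ = Z' c e * ((∑ a : X, G a c) * (∑ a : X, G a e)) := by ring
  have hGsum : ∑ a : X, ∑ b : X, G' a b
      = -(∑ c : X, ∑ e : X, Z' c e * ((∑ a : X, G a c) * (∑ a : X, G a e))) := by
    rw [hGid]
    simp only [Matrix.neg_apply]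
    rw [← expand]
    simp [Finset.sum_neg_distrib]
  rw [hGsum]
  rw [neg_nonneg]
  refine Finset.sum_nonpos fun c _ => Finset.sum_nonpos fun e _ => ?_
  have h6 : Z' c e ≤ 0 := by
    rw [hZ'def]
    exact mul_nonpos_of_nonneg_of_nonpos (Real.exp_pos _).le (neg_nonpos.2 dist_nonneg)
  have h7 : (0:ℝ) ≤ (∑ a : X, G a c) * (∑ a : X, G a e) :=
    mul_nonneg (hw c).le (hw e).le
  exact mul_nonpos_of_nonpos_of_nonneg h6 h7

end main2

section final
variable {X : Type*} [MetricSpace X] [Fintype X] [DecidableEq X] [Nonempty X]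

private lemma my_det_analytic {M : ℝ → Matrix X X ℝ}
    (h : ∀ a b, AnalyticOnNhd ℝ (fun t => M t a b) Set.univ) :
    AnalyticOnNhd ℝ (fun t => (M t).det) Set.univ := by
  simp only [Matrix.det_apply']
  exact Finset.analyticOnNhd_fun_sum _ fun σ _ =>
    analyticOnNhd_const.mul (Finset.analyticOnNhd_fun_prod _ fun i _ => h _ _)

private lemma Zm_an_ent (a b : X) :
    AnalyticOnNhd ℝ (fun t : ℝ => Zm (X := X) t a b) Set.univ :=
  ((analyticOnNhd_id.mul analyticOnNhd_const).neg).rexp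

theorem stmt_4' :
    ({t : ℝ | 0 < t ∧
        ¬IsUnit (Matrix.of fun a b : X => Real.exp (-(t * dist a b))).det}.Finite) ∧
    (∃ t₀ > (0 : ℝ),
      (∀ t ≥ t₀, IsUnit (Matrix.of fun a b : X => Real.exp (-(t * dist a b))).det) ∧
      MonotoneOn
        (fun t : ℝ =>
          ∑ a : X, ∑ b : X, (Matrix.of fun a b : X => Real.exp (-(t * dist a b)))⁻¹ a b)
        (Set.Ici t₀)) ∧
    Tendsto
      (fun t : ℝ =>
        ∑ a : X, ∑ b : X, (Matrix.of fun a b : X => Real.exp (-(t * dist a b)))⁻¹ a b)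
      atTop (𝓝 (Fintype.card X : ℝ)) := by
  have hZt : ∀ t : ℝ,
      (Matrix.of fun a b : X => Real.exp (-(t * dist a b))) = Zm (X := X) t := fun _ => rfl
  simp only [hZt]
  have hev : ∀ᶠ t in atTop, (Zm (X := X) t).det ≠ 0 :=
    Zm_det_tendsto.eventually_ne one_ne_zero
  obtain ⟨T, hT⟩ := eventually_atTop.mp hev
  refine ⟨?_, ?_, ?_⟩
  · -- finiteness
    by_contra hinf
    have hi : {t : ℝ | 0 < t ∧ ¬IsUnit (Zm (X := X) t).det}.Infinite := hinf
    have hsub : {t : ℝ | 0 < t ∧ ¬IsUnit (Zm (X := X) t).det} ⊆ Set.Icc 0 T := by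
      rintro t ⟨ht0, htu⟩
      refine ⟨ht0.le, ?_⟩
      by_contra hgt
      push_neg at hgt
      exact htu (isUnit_iff_ne_zero.2 (hT t hgt.le))
    obtain ⟨z, -, hz⟩ := hi.exists_accPt_of_subset_isCompact isCompact_Icc hsub
    have han : AnalyticOnNhd ℝ (fun t => (Zm (X := X) t).det) Set.univ :=
      my_det_analytic Zm_an_ent
    have hfreq : ∃ᶠ s in 𝓝[≠] z, (Zm (X := X) s).det = 0 := by
      rw [accPt_iff_frequently] at hz
      rw [frequently_nhdsWithin_iff]
      refine hz.mono ?_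
      rintro y ⟨hy1, hy2, hy3⟩
      exact ⟨not_not.1 (mt isUnit_iff_ne_zero.2 hy3), hy1⟩
    have h0 := han.eqOn_zero_of_preconnected_of_frequently_eq_zero isPreconnected_univ
      (Set.mem_univ z) hfreq
    exact hT T le_rfl (h0 (Set.mem_univ T))
  · -- monotonicity
    have hwt : ∀ c : X, Tendsto (fun t => ∑ a : X, (Zm (X := X) t)⁻¹ a c) atTop (𝓝 1) := by
      intro c
      have h := tendsto_finset_sum (Finset.univ) fun (a : X) _ => Zm_inv_tendsto (X := X) a c
      have h1 : ∑ a : X, (1 : Matrix X X ℝ) a c = 1 := by simp [Matrix.one_apply]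
      rwa [h1] at h
    have hposw : ∀ᶠ t in atTop, ∀ c : X, 0 < ∑ a : X, (Zm (X := X) t)⁻¹ a c := by
      rw [eventually_all]
      exact fun c => (hwt c).eventually (eventually_gt_nhds zero_lt_one)
    obtain ⟨t₁, ht₁⟩ := eventually_atTop.mp (hev.and hposw)
    refine ⟨max t₁ 1, lt_of_lt_of_le zero_lt_one (le_max_right _ _), ?_, ?_⟩
    · intro t htt
      exact isUnit_iff_ne_zero.2 (ht₁ t (le_trans (le_max_left _ _) htt)).1
    · have hmem : ∀ t ∈ Set.Ici (max t₁ 1),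
          (Zm (X := X) t).det ≠ 0 ∧ ∀ c : X, 0 < ∑ a : X, (Zm (X := X) t)⁻¹ a c :=
        fun t htt => ht₁ t (le_trans (le_max_left _ _) htt)
      have hdiffAt : ∀ t ∈ Set.Ici (max t₁ 1),
          DifferentiableAt ℝ (fun s : ℝ => ∑ a : X, ∑ b : X, (Zm (X := X) s)⁻¹ a b) t :=
        fun t htt => DifferentiableAt.fun_sum fun a _ =>
          DifferentiableAt.fun_sum fun b _ => Zm_inv_diffAt (hmem t htt).1 a b
      refine monotoneOn_of_deriv_nonneg (convex_Ici _) ?_ ?_ ?_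
      · exact fun t htt => ((hdiffAt t htt).continuousAt).continuousWithinAt
      · intro t htt
        rw [interior_Ici] at htt
        exact (hdiffAt t (Set.mem_Ici.mpr (le_of_lt htt))).differentiableWithinAt
      · intro t htt
        rw [interior_Ici] at htt
        exact Zm_deriv_nonneg (hmem t (Set.mem_Ici.mpr htt.le)).1 (hmem t (Set.mem_Ici.mpr htt.le)).2
  · -- limit
    have hsum1 : ∑ a : X, ∑ b : X, (1 : Matrix X X ℝ) a b = (Fintype.card X : ℝ) := by
      simp [Matrix.one_apply]
    rw [← hsum1]
    exact tendsto_finset_sum _ fun a _ => tendsto_finset_sum _ fun b _ => Zm_inv_tendsto a b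

end final


/-- For a finite nonempty metric space `X` with scaled similarity
matrices `Z_t(a,b) = exp (-t d(a,b))`: (1) the set of `t > 0` where `Z_t` is not
invertible is finite; (2) for some `t₀ > 0`, `Z_t` is invertible for all `t ≥ t₀`
and the magnitude function `t ↦ |tX| = ∑_{a,b} Z_t⁻¹(a,b)` is monotone increasing
on `[t₀, ∞)`; (3) the magnitude function tends to `#X` as `t → ∞`. -/
theorem stmt_4 {X : Type*} [MetricSpace X] [Fintype X] [DecidableEq X] [Nonempty X] :
    ({t : ℝ | 0 < t ∧
        ¬IsUnit (Matrix.of fun a b : X => Real.exp (-(t * dist a b))).det}.Finite) ∧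
    (∃ t₀ > (0 : ℝ),
      (∀ t ≥ t₀, IsUnit (Matrix.of fun a b : X => Real.exp (-(t * dist a b))).det) ∧
      MonotoneOn
        (fun t : ℝ =>
          ∑ a : X, ∑ b : X, (Matrix.of fun a b : X => Real.exp (-(t * dist a b)))⁻¹ a b)
        (Set.Ici t₀)) ∧
    Tendsto
      (fun t : ℝ =>
        ∑ a : X, ∑ b : X, (Matrix.of fun a b : X => Real.exp (-(t * dist a b)))⁻¹ a b)
      atTop (𝓝 (Fintype.card X : ℝ)) := by
  exact stmt_4'
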